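/- For every n ≥ 4, the subspaces V_5 = {A ∈ ℝ^{n×n} : A = −Aᵀ, A·1_n = 0} and V_6 = {A ∈ ℝ^{n×n} : A = Aᵀ, A·1_n = 0, A_{ii} = 0 for all i} are irreducible S_n-subrepresentations of ℝ^{n×n}: each is nonzero, invariant under the action (σ·X)_{ij} = X_{σ⁻¹(i),σ⁻¹(j)}, and has no invariant subspaces other than the zero subspace and itself. -/

import Mathlib

open Matrix

namespace GraphIrred

variable (n : ℕ)

/-- The action of `Sₙ` on `n × n` matrices: `(σ · X) i j = X (σ⁻¹ i) (σ⁻¹ j)`. -/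
def act (σ : Equiv.Perm (Fin n)) (X : Matrix (Fin n) (Fin n) ℝ) :
    Matrix (Fin n) (Fin n) ℝ :=
  Matrix.of fun i j => X (σ⁻¹ i) (σ⁻¹ j)

/-- A subspace of `ℝⁿˣⁿ` is invariant if it is closed under the `Sₙ`-action. -/
def Invariant (U : Submodule ℝ (Matrix (Fin n) (Fin n) ℝ)) : Prop :=
  ∀ (σ : Equiv.Perm (Fin n)) (X : Matrix (Fin n) (Fin n) ℝ), X ∈ U → act n σ X ∈ U

/-- `V₅`: antisymmetric matrices whose rows sum to zero. -/
def V5 : Submodule ℝ (Matrix (Fin n) (Fin n) ℝ) where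
  carrier := {X | X = -Xᵀ ∧ ∀ i, ∑ j, X i j = 0}
  zero_mem' := ⟨by simp, by simp⟩
  add_mem' := by
    rintro X Y ⟨hX1, hX2⟩ ⟨hY1, hY2⟩
    refine ⟨?_, fun i => ?_⟩
    · rw [Matrix.transpose_add, neg_add]
      exact congrArg₂ (· + ·) hX1 hY1
    · simp [Matrix.add_apply, Finset.sum_add_distrib, hX2 i, hY2 i]
  smul_mem' := by
    rintro c X ⟨hX1, hX2⟩
    refine ⟨?_, fun i => ?_⟩
    · rw [Matrix.transpose_smul, ← smul_neg]
      exact congrArg (c • ·) hX1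
    · simp [Matrix.smul_apply, ← Finset.mul_sum, hX2 i]

/-- `V₆`: symmetric matrices with zero diagonal whose rows sum to zero. -/
def V6 : Submodule ℝ (Matrix (Fin n) (Fin n) ℝ) where
  carrier := {X | X = Xᵀ ∧ (∀ i, ∑ j, X i j = 0) ∧ ∀ i, X i i = 0}
  zero_mem' := ⟨by simp, by simp, by simp⟩
  add_mem' := by
    rintro X Y ⟨hX1, hX2, hX3⟩ ⟨hY1, hY2, hY3⟩
    refine ⟨?_, fun i => ?_, fun i => ?_⟩
    · rw [Matrix.transpose_add]
      exact congrArg₂ (· + ·) hX1 hY1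
    · simp [Matrix.add_apply, Finset.sum_add_distrib, hX2 i, hY2 i]
    · simp [Matrix.add_apply, hX3 i, hY3 i]
  smul_mem' := by
    rintro c X ⟨hX1, hX2, hX3⟩
    refine ⟨?_, fun i => ?_, fun i => ?_⟩
    · rw [Matrix.transpose_smul]
      exact congrArg (c • ·) hX1
    · simp [Matrix.smul_apply, ← Finset.mul_sum, hX2 i]
    · simp [Matrix.smul_apply, hX3 i]

open Finset Equiv
variable {n}


/-- indicator entry -/
def ind (p a q b : Fin n) : ℝ := if p = a ∧ q = b then 1 else 0

def Tm (a b c : Fin n) : Matrix (Fin n) (Fin n) ℝ :=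
  Matrix.of fun p q =>
    ind p a q b - ind p b q a + ind p b q c - ind p c q b + ind p c q a - ind p a q c

def Cm (i j k l : Fin n) : Matrix (Fin n) (Fin n) ℝ :=
  Matrix.of fun p q =>
    ind p i q j - ind p j q i + ind p j q k - ind p k q j
      + ind p k q l - ind p l q k + ind p l q i - ind p i q l

def Dm (i j k l : Fin n) : Matrix (Fin n) (Fin n) ℝ :=
  Matrix.of fun p q =>
    ind p i q j + ind p j q i + ind p k q l + ind p l q k
      - ind p i q l - ind p l q i - ind p k q j - ind p j q k

lemma sum_ind_univ (p x y : Fin n) : ∑ q, ind p x q y = if p = x then 1 else 0 := by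
  unfold ind; by_cases h : p = x <;> simp [h]

lemma sum_ind_univ' (x q y : Fin n) : ∑ p, ind p x q y = if q = y then 1 else 0 := by
  unfold ind; by_cases h : q = y <;> simp [h]

lemma sum_ind_right (s : Finset (Fin n)) (f : Fin n → ℝ) (p a q : Fin n) :
    ∑ x ∈ s, f x * ind p a q x = if p = a ∧ q ∈ s then f q else 0 := by
  unfold ind
  by_cases h : p = a <;> simp [h, mul_ite, Finset.sum_ite_eq]

lemma sum_ind_left (s : Finset (Fin n)) (f : Fin n → ℝ) (p q b : Fin n) :
    ∑ x ∈ s, f x * ind p x q b = if q = b ∧ p ∈ s then f p else 0 := by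
  unfold ind
  by_cases h : q = b <;> simp [h, mul_ite, Finset.sum_ite_eq, and_comm]

lemma sum_if_eq (s : Finset (Fin n)) (f : Fin n → ℝ) (p : Fin n) (C : Prop) [Decidable C] :
    ∑ x ∈ s, (if p = x ∧ C then f x else 0) = if p ∈ s ∧ C then f p else 0 := by
  by_cases hC : C <;> simp [hC, Finset.sum_ite_eq]

lemma sum_if_const (s : Finset (Fin n)) (f : Fin n → ℝ) (C : Prop) [Decidable C] :
    ∑ x ∈ s, (if C then f x else 0) = if C then ∑ x ∈ s, f x else 0 := by
  by_cases hC : C <;> simp [hC]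

lemma sum_univ_erase (f : Fin n → ℝ) (a : Fin n) :
    ∑ x ∈ univ.erase a, f x = (∑ x, f x) - f a :=
  Finset.sum_erase_eq_sub (mem_univ a)

lemma sum_univ_erase2 (f : Fin n → ℝ) (a b : Fin n) (hba : b ≠ a) :
    ∑ x ∈ (univ.erase a).erase b, f x = (∑ x, f x) - f a - f b := by
  rw [Finset.sum_erase_eq_sub (by simp [hba]), sum_univ_erase]

lemma exists_ne3 (hn : 3 ≤ n) (p q : Fin n) : ∃ r : Fin n, r ≠ p ∧ r ≠ q := by
  by_contra h
  push_neg at h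
  have hsub : (univ : Finset (Fin n)) ⊆ {p, q} := by
    intro r _
    rcases eq_or_ne r p with rfl | hr
    · simp
    · simp [h r hr]
  have := Finset.card_le_card hsub
  simp only [Finset.card_univ, Fintype.card_fin] at this
  have : ({p, q} : Finset (Fin n)).card ≤ 2 :=
    le_trans (Finset.card_insert_le _ _) (by simp)
  omega


lemma exists_ne4 (hn : 4 ≤ n) (p q r : Fin n) : ∃ d : Fin n, d ≠ p ∧ d ≠ q ∧ d ≠ r := by
  by_contra h
  push_neg at h
  have hsub : (univ : Finset (Fin n)) ⊆ {p, q, r} := by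
    intro d _
    rcases eq_or_ne d p with rfl | h1
    · simp
    rcases eq_or_ne d q with rfl | h2
    · simp
    · simp [h d h1 h2]
  have h1 := Finset.card_le_card hsub
  simp only [Finset.card_univ, Fintype.card_fin] at h1
  have h2 : ({p, q, r} : Finset (Fin n)).card ≤ 3 :=
    le_trans (Finset.card_insert_le _ _)
      (by
        have h3 : ({q, r} : Finset (Fin n)).card ≤ 2 :=
          le_trans (Finset.card_insert_le _ _) (by simp)
        omega)
  omega

lemma exists_perm_map4 (i j k l i' j' k' l' : Fin n)
    (hij : i ≠ j) (hik : i ≠ k) (hil : i ≠ l) (hjk : j ≠ k) (hjl : j ≠ l) (hkl : k ≠ l)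
    (hij' : i' ≠ j') (hik' : i' ≠ k') (hil' : i' ≠ l') (hjk' : j' ≠ k') (hjl' : j' ≠ l')
    (hkl' : k' ≠ l') :
    ∃ σ : Equiv.Perm (Fin n), σ i = i' ∧ σ j = j' ∧ σ k = k' ∧ σ l = l' := by
  set σ₁ := Equiv.swap i i' with hσ₁
  set j₁ := σ₁ j with hj₁
  set k₁ := σ₁ k with hk₁
  set l₁ := σ₁ l with hl₁
  have hσ₁i : σ₁ i = i' := Equiv.swap_apply_left i i'
  have hj₁i' : j₁ ≠ i' := fun h => hij (σ₁.injective (hσ₁i.trans h.symm))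
  have hk₁i' : k₁ ≠ i' := fun h => hik (σ₁.injective (hσ₁i.trans h.symm))
  have hl₁i' : l₁ ≠ i' := fun h => hil (σ₁.injective (hσ₁i.trans h.symm))
  have hj₁k₁ : j₁ ≠ k₁ := fun h => hjk (σ₁.injective h)
  have hj₁l₁ : j₁ ≠ l₁ := fun h => hjl (σ₁.injective h)
  have hk₁l₁ : k₁ ≠ l₁ := fun h => hkl (σ₁.injective h)
  set σ₂ := Equiv.swap j₁ j' with hσ₂
  have hσ₂i' : σ₂ i' = i' := Equiv.swap_apply_of_ne_of_ne (Ne.symm hj₁i') hij'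
  have hσ₂j₁ : σ₂ j₁ = j' := Equiv.swap_apply_left _ _
  set k₂ := σ₂ k₁ with hk₂
  set l₂ := σ₂ l₁ with hl₂
  have hk₂i' : k₂ ≠ i' := fun h => hk₁i' (σ₂.injective (h.trans hσ₂i'.symm))
  have hl₂i' : l₂ ≠ i' := fun h => hl₁i' (σ₂.injective (h.trans hσ₂i'.symm))
  have hk₂j' : k₂ ≠ j' := fun h => hj₁k₁ ((σ₂.injective (h.trans hσ₂j₁.symm)).symm)
  have hl₂j' : l₂ ≠ j' := fun h => hj₁l₁ ((σ₂.injective (h.trans hσ₂j₁.symm)).symm)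
  have hk₂l₂ : k₂ ≠ l₂ := fun h => hk₁l₁ (σ₂.injective h)
  set σ₃ := Equiv.swap k₂ k' with hσ₃
  have hσ₃i' : σ₃ i' = i' := Equiv.swap_apply_of_ne_of_ne (Ne.symm hk₂i') hik'
  have hσ₃j' : σ₃ j' = j' := Equiv.swap_apply_of_ne_of_ne (Ne.symm hk₂j') hjk'
  have hσ₃k₂ : σ₃ k₂ = k' := Equiv.swap_apply_left _ _
  set l₃ := σ₃ l₂ with hl₃
  have hl₃i' : l₃ ≠ i' := fun h => hl₂i' (σ₃.injective (h.trans hσ₃i'.symm))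
  have hl₃j' : l₃ ≠ j' := fun h => hl₂j' (σ₃.injective (h.trans hσ₃j'.symm))
  have hl₃k' : l₃ ≠ k' := fun h => hk₂l₂ ((σ₃.injective (h.trans hσ₃k₂.symm)).symm)
  set σ₄ := Equiv.swap l₃ l' with hσ₄
  have hσ₄i' : σ₄ i' = i' := Equiv.swap_apply_of_ne_of_ne (Ne.symm hl₃i') hil'
  have hσ₄j' : σ₄ j' = j' := Equiv.swap_apply_of_ne_of_ne (Ne.symm hl₃j') hjl'
  have hσ₄k' : σ₄ k' = k' := Equiv.swap_apply_of_ne_of_ne (Ne.symm hl₃k') hkl'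
  refine ⟨σ₄ * σ₃ * σ₂ * σ₁, ?_, ?_, ?_, ?_⟩
  · simp only [Equiv.Perm.mul_apply, hσ₁i, hσ₂i', hσ₃i', hσ₄i']
  · simp only [Equiv.Perm.mul_apply, ← hj₁, hσ₂j₁, hσ₃j', hσ₄j']
  · simp only [Equiv.Perm.mul_apply, ← hk₁, ← hk₂, hσ₃k₂, hσ₄k']
  · simp only [Equiv.Perm.mul_apply, ← hl₁, ← hl₂, ← hl₃]
    exact Equiv.swap_apply_left l₃ l'

lemma mem_V5_iff (X : Matrix (Fin n) (Fin n) ℝ) :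
    X ∈ V5 n ↔ X = -Xᵀ ∧ ∀ i, ∑ j, X i j = 0 := Iff.rfl

lemma mem_V6_iff (X : Matrix (Fin n) (Fin n) ℝ) :
    X ∈ V6 n ↔ X = Xᵀ ∧ (∀ i, ∑ j, X i j = 0) ∧ ∀ i, X i i = 0 := Iff.rfl

lemma V5.skew {X : Matrix (Fin n) (Fin n) ℝ} (h : X ∈ V5 n) (p q : Fin n) :
    X q p = -X p q := by
  have := congrFun (congrFun h.1 q) p
  simp only [Matrix.neg_apply, Matrix.transpose_apply] at this
  linarith

lemma V5.diag {X : Matrix (Fin n) (Fin n) ℝ} (h : X ∈ V5 n) (p : Fin n) : X p p = 0 := by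
  have := V5.skew h p p; linarith

lemma V5.col {X : Matrix (Fin n) (Fin n) ℝ} (h : X ∈ V5 n) (q : Fin n) :
    ∑ i, X i q = 0 := by
  have h2 : ∑ i, X i q = ∑ i, -X q i := Finset.sum_congr rfl fun i _ => V5.skew h q i
  rw [h2, Finset.sum_neg_distrib, h.2 q, neg_zero]

lemma V6.symm {X : Matrix (Fin n) (Fin n) ℝ} (h : X ∈ V6 n) (p q : Fin n) :
    X q p = X p q := by
  have := congrFun (congrFun h.1 q) p
  simpa using this

lemma V6.col {X : Matrix (Fin n) (Fin n) ℝ} (h : X ∈ V6 n) (q : Fin n) :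
    ∑ i, X i q = 0 := by
  have h2 : ∑ i, X i q = ∑ i, X q i := Finset.sum_congr rfl fun i _ => V6.symm h q i
  rw [h2, h.2.1 q]

lemma act_apply (σ : Equiv.Perm (Fin n)) (X : Matrix (Fin n) (Fin n) ℝ) (p q : Fin n) :
    act n σ X p q = X (σ⁻¹ p) (σ⁻¹ q) := rfl

lemma V5_invariant : Invariant n (V5 n) := by
  intro σ X hX
  refine ⟨?_, fun p => ?_⟩
  · ext p q
    simp only [act_apply, Matrix.neg_apply, Matrix.transpose_apply]
    exact V5.skew hX (σ⁻¹ q) (σ⁻¹ p)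
  · show ∑ q, X (σ⁻¹ p) (σ⁻¹ q) = 0
    rw [Equiv.sum_comp σ⁻¹ (fun q => X (σ⁻¹ p) q)]
    exact hX.2 _

lemma V6_invariant : Invariant n (V6 n) := by
  intro σ X hX
  refine ⟨?_, fun p => ?_, fun p => ?_⟩
  · ext p q
    simp only [act_apply, Matrix.transpose_apply]
    exact V6.symm hX (σ⁻¹ q) (σ⁻¹ p)
  · show ∑ q, X (σ⁻¹ p) (σ⁻¹ q) = 0
    rw [Equiv.sum_comp σ⁻¹ (fun q => X (σ⁻¹ p) q)]
    exact hX.2.1 _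
  · exact hX.2.2 _

lemma act_Cm (σ : Equiv.Perm (Fin n)) (i j k l : Fin n) :
    act n σ (Cm i j k l) = Cm (σ i) (σ j) (σ k) (σ l) := by
  ext p q
  simp only [act_apply, Cm, Matrix.of_apply, ind, Equiv.Perm.inv_eq_iff_eq]

lemma act_Dm (σ : Equiv.Perm (Fin n)) (i j k l : Fin n) :
    act n σ (Dm i j k l) = Dm (σ i) (σ j) (σ k) (σ l) := by
  ext p q
  simp only [act_apply, Dm, Matrix.of_apply, ind, Equiv.Perm.inv_eq_iff_eq]

lemma Tm_mem_V5 (a b c : Fin n) : Tm a b c ∈ V5 n := by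
  refine ⟨?_, fun p => ?_⟩
  · ext p q
    simp only [Tm, Matrix.of_apply, Matrix.neg_apply, Matrix.transpose_apply, ind, and_comm]
    ring
  · show ∑ q, (Tm a b c p q) = 0
    simp only [Tm, Matrix.of_apply]
    simp only [Finset.sum_sub_distrib, Finset.sum_add_distrib, sum_ind_univ]
    ring

lemma Dm_mem_V6 (i j k l : Fin n)
    (hij : i ≠ j) (hil : i ≠ l) (hjk : j ≠ k) (hkl : k ≠ l) : Dm i j k l ∈ V6 n := by
  refine ⟨?_, fun p => ?_, fun p => ?_⟩
  · ext p q
    simp only [Dm, Matrix.of_apply, Matrix.transpose_apply, ind, and_comm]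
    ring
  · show ∑ q, (Dm i j k l p q) = 0
    simp only [Dm, Matrix.of_apply]
    simp only [Finset.sum_sub_distrib, Finset.sum_add_distrib, sum_ind_univ]
    ring
  · show (Dm i j k l) p p = 0
    simp only [Dm, Matrix.of_apply, ind]
    have h1 : ¬(p = i ∧ p = j) := fun ⟨h1, h2⟩ => hij (h1 ▸ h2 ▸ rfl)
    have h2 : ¬(p = j ∧ p = i) := fun ⟨h1, h2⟩ => hij (h2 ▸ h1 ▸ rfl)
    have h3 : ¬(p = k ∧ p = l) := fun ⟨h1, h2⟩ => hkl (h1 ▸ h2 ▸ rfl)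
    have h4 : ¬(p = l ∧ p = k) := fun ⟨h1, h2⟩ => hkl (h2 ▸ h1 ▸ rfl)
    have h5 : ¬(p = i ∧ p = l) := fun ⟨h1, h2⟩ => hil (h1 ▸ h2 ▸ rfl)
    have h6 : ¬(p = l ∧ p = i) := fun ⟨h1, h2⟩ => hil (h2 ▸ h1 ▸ rfl)
    have h7 : ¬(p = k ∧ p = j) := fun ⟨h1, h2⟩ => hjk (h2 ▸ h1 ▸ rfl)
    have h8 : ¬(p = j ∧ p = k) := fun ⟨h1, h2⟩ => hjk (h1 ▸ h2 ▸ rfl)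
    simp [h1, h2, h3, h4, h5, h6, h7, h8]

lemma loc6 (X : Matrix (Fin n) (Fin n) ℝ) (hs : ∀ p q, X q p = X p q) (i j k l : Fin n)
    (hij : i ≠ j) (hik : i ≠ k) (hil : i ≠ l) (hjk : j ≠ k) (hjl : j ≠ l) (hkl : k ≠ l) :
    X - act n (Equiv.swap i k) X - act n (Equiv.swap j l) X
        + act n (Equiv.swap i k) (act n (Equiv.swap j l) X)
      = (X i j - X k j - X i l + X k l) • Dm i j k l := by
  have hji := hij.symm; have hki := hik.symm; have hli := hil.symm
  have hkj := hjk.symm; have hlj := hjl.symm; have hlk := hkl.symm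
  ext p q
  simp only [Matrix.sub_apply, Matrix.add_apply, Matrix.smul_apply, smul_eq_mul,
    act_apply, Equiv.swap_inv]
  have hp : p = i ∨ p = j ∨ p = k ∨ p = l ∨ (p ≠ i ∧ p ≠ j ∧ p ≠ k ∧ p ≠ l) := by tauto
  have hq : q = i ∨ q = j ∨ q = k ∨ q = l ∨ (q ≠ i ∧ q ≠ j ∧ q ≠ k ∧ q ≠ l) := by tauto
  rcases hp with rfl | rfl | rfl | rfl | ⟨hp1, hp2, hp3, hp4⟩ <;>
    rcases hq with rfl | rfl | rfl | rfl | ⟨hq1, hq2, hq3, hq4⟩ <;>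
    simp only [Dm, Matrix.of_apply, ind, Equiv.swap_apply_left, Equiv.swap_apply_right,
      Equiv.swap_apply_of_ne_of_ne, *] <;>
    simp only [Equiv.swap_apply_def, *, if_true, if_false, ite_true, ite_false, and_self,
      and_true, true_and, and_false, false_and] <;>
    first
      | ring
      | (linarith [hs i j, hs i k, hs i l, hs j k, hs j l, hs k l])

set_option maxRecDepth 4000 in
lemma loc5 (X : Matrix (Fin n) (Fin n) ℝ) (ha : ∀ p q, X q p = -X p q) (i j k l : Fin n)
    (hij : i ≠ j) (hik : i ≠ k) (hil : i ≠ l) (hjk : j ≠ k) (hjl : j ≠ l) (hkl : k ≠ l) :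
    X - act n (Equiv.swap i k) X - act n (Equiv.swap j l) X
        + act n (Equiv.swap i k) (act n (Equiv.swap j l) X)
      = (X i j - X k j - X i l + X k l) • Cm i j k l := by
  have hji := hij.symm; have hki := hik.symm; have hli := hil.symm
  have hkj := hjk.symm; have hlj := hjl.symm; have hlk := hkl.symm
  have eji : X j i = -X i j := ha i j
  have eki : X k i = -X i k := ha i k
  have eli : X l i = -X i l := ha i l
  have ekj : X k j = -X j k := ha j k
  have elj : X l j = -X j l := ha j l
  have elk : X l k = -X k l := ha k l
  have dii : X i i = 0 := by have := ha i i; linarith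
  have djj : X j j = 0 := by have := ha j j; linarith
  have dkk : X k k = 0 := by have := ha k k; linarith
  have dll : X l l = 0 := by have := ha l l; linarith
  clear ha
  ext p q
  simp only [Matrix.sub_apply, Matrix.add_apply, Matrix.smul_apply, smul_eq_mul,
    act_apply, Equiv.swap_inv]
  have hp : p = i ∨ p = j ∨ p = k ∨ p = l ∨ (p ≠ i ∧ p ≠ j ∧ p ≠ k ∧ p ≠ l) := by tauto
  have hq : q = i ∨ q = j ∨ q = k ∨ q = l ∨ (q ≠ i ∧ q ≠ j ∧ q ≠ k ∧ q ≠ l) := by tauto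
  rcases hp with rfl | rfl | rfl | rfl | ⟨hp1, hp2, hp3, hp4⟩ <;>
    rcases hq with rfl | rfl | rfl | rfl | ⟨hq1, hq2, hq3, hq4⟩ <;>
    simp only [Cm, Matrix.of_apply, ind, Equiv.swap_apply_left, Equiv.swap_apply_right,
      Equiv.swap_apply_of_ne_of_ne, *] <;>
    simp only [Equiv.swap_apply_def, *, if_true, if_false, ite_true, ite_false, and_self,
      and_true, true_and, and_false, false_and] <;>
    ring
lemma card_erase2 (i k : Fin n) (hik : i ≠ k) :
    ((univ.erase i).erase k).card = n - 2 := by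
  rw [Finset.card_erase_of_mem (by simp [hik.symm]),
    Finset.card_erase_of_mem (Finset.mem_univ i), Finset.card_univ, Fintype.card_fin]
  omega

lemma stepA6 (hn : 4 ≤ n) {X : Matrix (Fin n) (Fin n) ℝ} (hX : X ∈ V6 n) (hX0 : X ≠ 0) :
    ∃ i j k l : Fin n, i ≠ j ∧ i ≠ k ∧ i ≠ l ∧ j ≠ k ∧ j ≠ l ∧ k ≠ l ∧
      X i j - X k j - X i l + X k l ≠ 0 := by
  by_contra h
  push_neg at h
  apply hX0
  have key1 : ∀ i k j : Fin n, i ≠ k → j ≠ i → j ≠ k → X i j = X k j := by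
    intro i k j hik hji hjk
    have hsum : ∑ l, (X i l - X k l) = 0 := by
      rw [Finset.sum_sub_distrib, hX.2.1 i, hX.2.1 k]; ring
    have hsplit : ∑ l ∈ (univ.erase i).erase k, (X i l - X k l)
        = (∑ l, (X i l - X k l)) - (X i i - X k i) - (X i k - X k k) :=
      sum_univ_erase2 _ i k hik.symm
    have hconst : ∀ l ∈ (univ.erase i).erase k, X i l - X k l = X i j - X k j := by
      intro l hl
      have hlk : l ≠ k := (Finset.mem_erase.1 hl).1
      have hli : l ≠ i := (Finset.mem_erase.1 (Finset.mem_erase.1 hl).2).1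
      rcases eq_or_ne l j with rfl | hlj
      · rfl
      · have := h i j k l hji.symm hik hli.symm hjk hlj.symm hlk.symm
        linarith
    rw [Finset.sum_congr rfl hconst, Finset.sum_const, card_erase2 i k hik, hsum] at hsplit
    have hdk := hX.2.2 k
    have hdi := hX.2.2 i
    have hsy := V6.symm hX i k
    have h2 : ((n - 2 : ℕ) : ℝ) * (X i j - X k j) = 0 := by
      rw [nsmul_eq_mul] at hsplit; linarith
    have hne : ((n - 2 : ℕ) : ℝ) ≠ 0 := Nat.cast_ne_zero.2 (by omega)
    rcases mul_eq_zero.1 h2 with h3 | h3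
    · exact absurd h3 hne
    · linarith
  have key2 : ∀ p j j' : Fin n, j ≠ p → j' ≠ p → X p j = X p j' := by
    intro p j j' hjp hj'p
    rcases eq_or_ne j j' with rfl | hjj'
    · rfl
    calc X p j = X j' j := key1 p j' j hj'p.symm hjp hjj'
      _ = X j j' := V6.symm hX j j'
      _ = X p j' := key1 j p j' hjp hjj'.symm hj'p
  ext p q
  show X p q = 0
  rcases eq_or_ne p q with rfl | hpq
  · exact hX.2.2 p
  obtain ⟨h0, hconst⟩ : (∑ j ∈ univ.erase p, X p j = 0) ∧
      ∀ j ∈ univ.erase p, X p j = X p q := by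
    constructor
    · rw [sum_univ_erase, hX.2.1 p, hX.2.2 p]; ring
    · intro j hj
      exact key2 p j q (Finset.mem_erase.1 hj).1 hpq.symm
  rw [Finset.sum_congr rfl hconst, Finset.sum_const,
    Finset.card_erase_of_mem (Finset.mem_univ p), Finset.card_univ, Fintype.card_fin,
    nsmul_eq_mul] at h0
  have hne : ((n - 1 : ℕ) : ℝ) ≠ 0 := Nat.cast_ne_zero.2 (by omega)
  rcases mul_eq_zero.1 h0 with h3 | h3
  · exact absurd h3 hne
  · exact h3

lemma stepA5 (hn : 4 ≤ n) {X : Matrix (Fin n) (Fin n) ℝ} (hX : X ∈ V5 n) (hX0 : X ≠ 0) :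
    ∃ i j k l : Fin n, i ≠ j ∧ i ≠ k ∧ i ≠ l ∧ j ≠ k ∧ j ≠ l ∧ k ≠ l ∧
      X i j - X k j - X i l + X k l ≠ 0 := by
  by_contra h
  push_neg at h
  apply hX0
  have key1 : ∀ i k j : Fin n, i ≠ k → j ≠ i → j ≠ k →
      ((n - 2 : ℕ) : ℝ) * (X i j - X k j) = -2 * X i k := by
    intro i k j hik hji hjk
    have hsum : ∑ l, (X i l - X k l) = 0 := by
      rw [Finset.sum_sub_distrib, hX.2 i, hX.2 k]; ring
    have hsplit : ∑ l ∈ (univ.erase i).erase k, (X i l - X k l)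
        = (∑ l, (X i l - X k l)) - (X i i - X k i) - (X i k - X k k) :=
      sum_univ_erase2 _ i k hik.symm
    have hconst : ∀ l ∈ (univ.erase i).erase k, X i l - X k l = X i j - X k j := by
      intro l hl
      have hlk : l ≠ k := (Finset.mem_erase.1 hl).1
      have hli : l ≠ i := (Finset.mem_erase.1 (Finset.mem_erase.1 hl).2).1
      rcases eq_or_ne l j with rfl | hlj
      · rfl
      · have := h i j k l hji.symm hik hli.symm hjk hlj.symm hlk.symm
        linarith
    rw [Finset.sum_congr rfl hconst, Finset.sum_const, card_erase2 i k hik, hsum,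
      nsmul_eq_mul] at hsplit
    have hdk := V5.diag hX k
    have hdi := V5.diag hX i
    have hsy := V5.skew hX i k
    linarith
  have entry0 : ∀ p q : Fin n, p ≠ q → X p q = 0 := by
    intro p q hpq
    obtain ⟨r, hrp, hrq⟩ := exists_ne3 (by omega) p q
    set m : ℝ := ((n - 2 : ℕ) : ℝ) with hm
    have hm2 : (2 : ℝ) ≤ m := by
      rw [hm]
      have : (2 : ℕ) ≤ n - 2 := by omega
      exact_mod_cast this
    have e1 : m * (X p q - X r q) = -2 * X p r := key1 p r q hrp.symm hpq.symm hrq.symm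
    have e2 : m * (X p r - X q r) = -2 * X p q := key1 p q r hpq hrp hrq
    have e3 : m * (X q p - X r p) = -2 * X q r := key1 q r p hrq.symm hpq hrp.symm
    have sqp := V5.skew hX p q
    have srq := V5.skew hX q r
    have srp := V5.skew hX p r
    set x := X p q
    set y := X q r
    set z := X p r
    have e1' : m * (x + y) = -2 * z := by rw [srq] at e1; linear_combination e1
    have e2' : m * (z - y) = -2 * x := e2
    have e3' : m * (-x + z) = -2 * y := by
      rw [sqp, srp] at e3; linear_combination e3
    have hxy : (m + 2) * (x - y) = 0 := by linear_combination e2' - e3'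
    have hx_eq_y : x = y := by
      rcases mul_eq_zero.1 hxy with h' | h'
      · linarith
      · linarith
    have hz : z = -m * x := by linear_combination (1/2) * e1' + (m/2) * hx_eq_y
    have hfac : (2 - m - m ^ 2) * x = 0 := by
      linear_combination e2' - m * hx_eq_y - m * hz
    rcases mul_eq_zero.1 hfac with h' | h'
    · nlinarith
    · exact h'
  ext p q
  show X p q = 0
  rcases eq_or_ne p q with rfl | hpq
  · exact V5.diag hX p
  · exact entry0 p q hpq

lemma span5_entry (a : Fin n) {X : Matrix (Fin n) (Fin n) ℝ} (hX : X ∈ V5 n) (p q : Fin n) :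
    (∑ b ∈ univ.erase a, ∑ c ∈ univ.erase a, X b c * Tm a b c p q) = 2 * X p q := by
  have hrow : ∀ b, ∑ c ∈ univ.erase a, X b c = -X b a := fun b => by
    rw [sum_univ_erase, hX.2 b]; ring
  have hcol : ∀ c, ∑ b ∈ univ.erase a, X b c = -X a c := fun c => by
    rw [sum_univ_erase, V5.col hX c]; ring
  have hinner : ∀ b, (∑ c ∈ univ.erase a, X b c * Tm a b c p q) =
      (-X b a) * ind p a q b - (-X b a) * ind p b q a
      + (if p = b ∧ q ∈ univ.erase a then X b q else 0)
      - (if q = b ∧ p ∈ univ.erase a then X b p else 0)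
      + (if q = a ∧ p ∈ univ.erase a then X b p else 0)
      - (if p = a ∧ q ∈ univ.erase a then X b q else 0) := by
    intro b
    simp only [Tm, Matrix.of_apply]
    simp only [mul_sub, mul_add, Finset.sum_sub_distrib, Finset.sum_add_distrib,
      ← Finset.sum_mul, sum_ind_right, sum_ind_left, hrow b]
  rw [Finset.sum_congr rfl (fun b _ => hinner b)]
  simp only [Finset.sum_sub_distrib, Finset.sum_add_distrib, sum_ind_right, sum_ind_left,
    sum_if_eq, sum_if_const, hcol]
  have d1 := V5.diag hX p
  have d2 := V5.diag hX q
  have s1 := V5.skew hX p q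
  have s2 := V5.skew hX p a
  have s3 := V5.skew hX a q
  by_cases hp : p = a <;> by_cases hq : q = a <;>
    simp only [hp, hq, Finset.mem_erase, Finset.mem_univ, and_true, ne_eq,
      not_true_eq_false, not_false_eq_true, if_true, if_false, true_and, and_false,
      false_and, and_self, ite_true, ite_false] <;>
    linarith [V5.diag hX a, V5.skew hX a a, V5.skew hX q a, V5.skew hX a p]

lemma span5 (a : Fin n) {X : Matrix (Fin n) (Fin n) ℝ} (hX : X ∈ V5 n)
    {W : Submodule ℝ (Matrix (Fin n) (Fin n) ℝ)}
    (hT : ∀ b c, b ≠ a → c ≠ a → b ≠ c → Tm a b c ∈ W) : X ∈ W := by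
  have hXeq : X = (1/2 : ℝ) • ∑ b ∈ univ.erase a, ∑ c ∈ univ.erase a, X b c • Tm a b c := by
    ext p q
    simp only [Matrix.smul_apply, Matrix.sum_apply, smul_eq_mul]
    rw [span5_entry a hX p q]
    ring
  rw [hXeq]
  refine Submodule.smul_mem _ _ (Submodule.sum_mem _ fun b hb => Submodule.sum_mem _ fun c hc => ?_)
  rcases eq_or_ne b c with rfl | hbc
  · rw [V5.diag hX b, zero_smul]
    exact W.zero_mem
  · exact Submodule.smul_mem _ _
      (hT b c (Finset.mem_erase.1 hb).1 (Finset.mem_erase.1 hc).1 hbc)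

lemma span6_Yentry (a b : Fin n) (hab : a ≠ b) {X : Matrix (Fin n) (Fin n) ℝ}
    (hX : X ∈ V6 n) (p q : Fin n) :
    ∑ i ∈ (univ.erase a).erase b, ∑ j ∈ (univ.erase a).erase b, X i j * Dm i j a b p q
      = (if p ∈ (univ.erase a).erase b ∧ q ∈ (univ.erase a).erase b then X p q else 0)
        + (if q ∈ (univ.erase a).erase b ∧ p ∈ (univ.erase a).erase b then X q p else 0)
        + (X b a + X a b) * ind p a q b + (X b a + X a b) * ind p b q a
        - (if q = b ∧ p ∈ (univ.erase a).erase b then -X p a - X p b else 0)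
        - (if p = b ∧ q ∈ (univ.erase a).erase b then -X q a - X q b else 0)
        - (if p = a ∧ q ∈ (univ.erase a).erase b then -X a q - X b q else 0)
        - (if q = a ∧ p ∈ (univ.erase a).erase b then -X a p - X b p else 0) := by
  have hrow2 : ∀ i, ∑ c ∈ (univ.erase a).erase b, X i c = -X i a - X i b := fun i => by
    rw [sum_univ_erase2 _ a b hab.symm, hX.2.1 i]; ring
  have hcol2 : ∀ c, ∑ i ∈ (univ.erase a).erase b, X i c = -X a c - X b c := fun c => by
    rw [sum_univ_erase2 _ a b hab.symm, V6.col hX c]; ring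
  have hS : ∑ i ∈ (univ.erase a).erase b, (-X i a - X i b) = X b a + X a b := by
    rw [Finset.sum_sub_distrib, Finset.sum_neg_distrib, hcol2 a, hcol2 b]
    have := hX.2.2 a; have := hX.2.2 b
    linarith
  have hinner : ∀ i, (∑ j ∈ (univ.erase a).erase b, X i j * Dm i j a b p q) =
      (if p = i ∧ q ∈ (univ.erase a).erase b then X i q else 0)
      + (if q = i ∧ p ∈ (univ.erase a).erase b then X i p else 0)
      + (-X i a - X i b) * ind p a q b + (-X i a - X i b) * ind p b q a
      - (-X i a - X i b) * ind p i q b - (-X i a - X i b) * ind p b q i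
      - (if p = a ∧ q ∈ (univ.erase a).erase b then X i q else 0)
      - (if q = a ∧ p ∈ (univ.erase a).erase b then X i p else 0) := by
    intro i
    simp only [Dm, Matrix.of_apply]
    simp only [mul_sub, mul_add, Finset.sum_sub_distrib, Finset.sum_add_distrib,
      ← Finset.sum_mul, sum_ind_right, sum_ind_left, hrow2 i]
  rw [Finset.sum_congr rfl (fun i _ => hinner i)]
  simp only [Finset.sum_sub_distrib, Finset.sum_add_distrib, sum_ind_right, sum_ind_left,
    sum_if_eq, sum_if_const, ← Finset.sum_mul, hS, hcol2]

lemma span6_Kentry (hn : 4 ≤ n) (a b : Fin n) (hab : a ≠ b) {X : Matrix (Fin n) (Fin n) ℝ}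
    (hX : X ∈ V6 n) (p q : Fin n) :
    ∑ i ∈ (univ.erase a).erase b, ∑ j ∈ (univ.erase a).erase b,
        (X i b - X i a) * Dm i a j b p q
      = ((n - 2 : ℕ) : ℝ) * ((if q = a ∧ p ∈ (univ.erase a).erase b then X p b - X p a else 0)
        + (if p = a ∧ q ∈ (univ.erase a).erase b then X q b - X q a else 0)
        - (if q = b ∧ p ∈ (univ.erase a).erase b then X p b - X p a else 0)
        - (if p = b ∧ q ∈ (univ.erase a).erase b then X q b - X q a else 0)) := by
  have hT0 : ∑ i ∈ (univ.erase a).erase b, (X i b - X i a) = 0 := by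
    rw [Finset.sum_sub_distrib, sum_univ_erase2 _ a b hab.symm, sum_univ_erase2 _ a b hab.symm,
      V6.col hX a, V6.col hX b]
    have := hX.2.2 a; have := hX.2.2 b
    have := V6.symm hX a b
    linarith
  have hinner : ∀ i, (∑ j ∈ (univ.erase a).erase b, (X i b - X i a) * Dm i a j b p q) =
      ((n - 2 : ℕ) : ℝ) * ((X i b - X i a) * ind p i q a)
      + ((n - 2 : ℕ) : ℝ) * ((X i b - X i a) * ind p a q i)
      + (if q = b ∧ p ∈ (univ.erase a).erase b then X i b - X i a else 0)
      + (if p = b ∧ q ∈ (univ.erase a).erase b then X i b - X i a else 0)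
      - ((n - 2 : ℕ) : ℝ) * ((X i b - X i a) * ind p i q b)
      - ((n - 2 : ℕ) : ℝ) * ((X i b - X i a) * ind p b q i)
      - (if q = a ∧ p ∈ (univ.erase a).erase b then X i b - X i a else 0)
      - (if p = a ∧ q ∈ (univ.erase a).erase b then X i b - X i a else 0) := by
    intro i
    simp only [Dm, Matrix.of_apply]
    simp only [mul_sub, mul_add, Finset.sum_sub_distrib, Finset.sum_add_distrib,
      sum_ind_right, sum_ind_left, Finset.sum_const, card_erase2 a b hab, nsmul_eq_mul]
  rw [Finset.sum_congr rfl (fun i _ => hinner i)]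
  simp only [Finset.sum_sub_distrib, Finset.sum_add_distrib, ← Finset.mul_sum,
    sum_ind_right, sum_ind_left, sum_if_const, hT0, ite_self]
  ring

lemma span6 (hn : 4 ≤ n) (a b : Fin n) (hab : a ≠ b) {X : Matrix (Fin n) (Fin n) ℝ}
    (hX : X ∈ V6 n) {W : Submodule ℝ (Matrix (Fin n) (Fin n) ℝ)}
    (hD : ∀ i j k l : Fin n, i ≠ j → i ≠ k → i ≠ l → j ≠ k → j ≠ l → k ≠ l →
      Dm i j k l ∈ W) : X ∈ W := by
  set m : ℝ := ((n - 2 : ℕ) : ℝ) with hm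
  have hm0 : m ≠ 0 := Nat.cast_ne_zero.2 (by omega)
  have hba := hab.symm
  have hcore : ∀ p q : Fin n, 2 * X p q =
      ((if p ∈ (univ.erase a).erase b ∧ q ∈ (univ.erase a).erase b then X p q else 0)
        + (if q ∈ (univ.erase a).erase b ∧ p ∈ (univ.erase a).erase b then X q p else 0)
        + (X b a + X a b) * ind p a q b + (X b a + X a b) * ind p b q a
        - (if q = b ∧ p ∈ (univ.erase a).erase b then -X p a - X p b else 0)
        - (if p = b ∧ q ∈ (univ.erase a).erase b then -X q a - X q b else 0)
        - (if p = a ∧ q ∈ (univ.erase a).erase b then -X a q - X b q else 0)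
        - (if q = a ∧ p ∈ (univ.erase a).erase b then -X a p - X b p else 0))
      - ((if q = a ∧ p ∈ (univ.erase a).erase b then X p b - X p a else 0)
        + (if p = a ∧ q ∈ (univ.erase a).erase b then X q b - X q a else 0)
        - (if q = b ∧ p ∈ (univ.erase a).erase b then X p b - X p a else 0)
        - (if p = b ∧ q ∈ (univ.erase a).erase b then X q b - X q a else 0)) := by
    intro p q
    by_cases hpa : p = a <;> by_cases hpb : p = b <;>
      by_cases hqa : q = a <;> by_cases hqb : q = b <;>
      first
        | (exact absurd (hpa.symm.trans hpb) hab)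
        | (exact absurd (hqa.symm.trans hqb) hab)
        | (simp only [ind, Finset.mem_erase, Finset.mem_univ, and_true, ne_eq,
            hpa, hpb, hqa, hqb, hab, hba, not_true_eq_false, not_false_eq_true,
            eq_self_iff_true, if_true, if_false, ite_true, ite_false, true_and,
            and_true, and_false, false_and, and_self, not_true, not_false_iff]
           linarith [V6.symm hX p q, V6.symm hX p a, V6.symm hX p b, V6.symm hX q a,
             V6.symm hX q b, V6.symm hX a b, hX.2.2 a, hX.2.2 b, hX.2.2 p, hX.2.2 q])
  have hent : ∀ p q, (2 * m) * X p q =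
      m * (∑ i ∈ (univ.erase a).erase b, ∑ j ∈ (univ.erase a).erase b,
        X i j * Dm i j a b p q)
      - (∑ i ∈ (univ.erase a).erase b, ∑ j ∈ (univ.erase a).erase b,
        (X i b - X i a) * Dm i a j b p q) := by
    intro p q
    rw [span6_Yentry a b hab hX p q, span6_Kentry hn a b hab hX p q]
    linear_combination m * hcore p q
  have hXeq : X = (1 / (2 * m)) •
      ((m • ∑ i ∈ (univ.erase a).erase b, ∑ j ∈ (univ.erase a).erase b,
          X i j • Dm i j a b)
        - ∑ i ∈ (univ.erase a).erase b, ∑ j ∈ (univ.erase a).erase b,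
          (X i b - X i a) • Dm i a j b) := by
    ext p q
    simp only [Matrix.smul_apply, Matrix.sub_apply, Matrix.sum_apply, smul_eq_mul]
    have := hent p q
    field_simp
    linarith [hent p q]
  rw [hXeq]
  refine Submodule.smul_mem _ _ (Submodule.sub_mem _
    (Submodule.smul_mem _ _ (Submodule.sum_mem _ fun i hi => Submodule.sum_mem _ fun j hj => ?_))
    (Submodule.sum_mem _ fun i hi => Submodule.sum_mem _ fun j hj => ?_))
  · obtain ⟨hib, hia⟩ : i ≠ b ∧ i ≠ a := by
      have h' := Finset.mem_erase.1 hi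
      exact ⟨h'.1, (Finset.mem_erase.1 h'.2).1⟩
    obtain ⟨hjb, hja⟩ : j ≠ b ∧ j ≠ a := by
      have h' := Finset.mem_erase.1 hj
      exact ⟨h'.1, (Finset.mem_erase.1 h'.2).1⟩
    rcases eq_or_ne i j with rfl | hij
    · rw [hX.2.2 i, zero_smul]
      exact W.zero_mem
    · exact Submodule.smul_mem _ _ (hD i j a b hij hia hib hja hjb hab)
  · obtain ⟨hib, hia⟩ : i ≠ b ∧ i ≠ a := by
      have h' := Finset.mem_erase.1 hi
      exact ⟨h'.1, (Finset.mem_erase.1 h'.2).1⟩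
    obtain ⟨hjb, hja⟩ : j ≠ b ∧ j ≠ a := by
      have h' := Finset.mem_erase.1 hj
      exact ⟨h'.1, (Finset.mem_erase.1 h'.2).1⟩
    rcases eq_or_ne i j with rfl | hij
    · have hzero : Dm i a i b = 0 := by
        ext p q
        simp only [Dm, Matrix.of_apply, Matrix.zero_apply]
        ring
      rw [hzero, smul_zero]
      exact W.zero_mem
    · exact Submodule.smul_mem _ _ (hD i a j b hia hij hib hja.symm hab hjb)


lemma Tm_eq_Cm (a b c d : Fin n) :
    Tm a b c = (1 / 2 : ℝ) • (Cm a b c d + Cm a b d c + Cm a d b c) := by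
  ext p q
  simp only [Tm, Cm, Matrix.smul_apply, Matrix.add_apply, Matrix.of_apply, smul_eq_mul]
  ring

lemma aux5 (hn : 4 ≤ n) (W : Submodule ℝ (Matrix (Fin n) (Fin n) ℝ))
    (hle : W ≤ V5 n) (hinv : Invariant n W) (hne : W ≠ ⊥) : W = V5 n := by
  obtain ⟨X, hXW, hX0⟩ := Submodule.exists_mem_ne_zero_of_ne_bot hne
  have hX5 := hle hXW
  obtain ⟨i, j, k, l, hij, hik, hil, hjk, hjl, hkl, hu⟩ := stepA5 hn hX5 hX0
  have hYW : X - act n (Equiv.swap i k) X - act n (Equiv.swap j l) X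
      + act n (Equiv.swap i k) (act n (Equiv.swap j l) X) ∈ W :=
    Submodule.add_mem _
      (Submodule.sub_mem _ (Submodule.sub_mem _ hXW (hinv _ _ hXW)) (hinv _ _ hXW))
      (hinv _ _ (hinv _ _ hXW))
  rw [loc5 X (V5.skew hX5) i j k l hij hik hil hjk hjl hkl] at hYW
  have hCW : Cm i j k l ∈ W := by
    have h2 := Submodule.smul_mem W (X i j - X k j - X i l + X k l)⁻¹ hYW
    rwa [smul_smul, inv_mul_cancel₀ hu, one_smul] at h2
  have hCall : ∀ a b c d : Fin n, a ≠ b → a ≠ c → a ≠ d → b ≠ c → b ≠ d → c ≠ d →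
      Cm a b c d ∈ W := by
    intro a b c d h1 h2 h3 h4 h5 h6
    obtain ⟨σ, hσ1, hσ2, hσ3, hσ4⟩ :=
      exists_perm_map4 i j k l a b c d hij hik hil hjk hjl hkl h1 h2 h3 h4 h5 h6
    have hmem := hinv σ _ hCW
    rwa [act_Cm, hσ1, hσ2, hσ3, hσ4] at hmem
  have hTall : ∀ b c : Fin n, b ≠ i → c ≠ i → b ≠ c → Tm i b c ∈ W := by
    intro b c hbi hci hbc
    obtain ⟨d, hd1, hd2, hd3⟩ := exists_ne4 hn i b c
    rw [Tm_eq_Cm i b c d]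
    have m1 := hCall i b c d hbi.symm hci.symm hd1.symm hbc hd2.symm hd3.symm
    have m2 := hCall i b d c hbi.symm hd1.symm hci.symm hd2.symm hbc hd3
    have m3 := hCall i d b c hd1.symm hbi.symm hci.symm hd2 hd3 hbc
    exact Submodule.smul_mem _ _ (Submodule.add_mem _ (Submodule.add_mem _ m1 m2) m3)
  refine le_antisymm hle fun Y hY => ?_
  exact span5 i hY hTall

lemma aux6 (hn : 4 ≤ n) (W : Submodule ℝ (Matrix (Fin n) (Fin n) ℝ))
    (hle : W ≤ V6 n) (hinv : Invariant n W) (hne : W ≠ ⊥) : W = V6 n := by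
  obtain ⟨X, hXW, hX0⟩ := Submodule.exists_mem_ne_zero_of_ne_bot hne
  have hX6 := hle hXW
  obtain ⟨i, j, k, l, hij, hik, hil, hjk, hjl, hkl, hu⟩ := stepA6 hn hX6 hX0
  have hYW : X - act n (Equiv.swap i k) X - act n (Equiv.swap j l) X
      + act n (Equiv.swap i k) (act n (Equiv.swap j l) X) ∈ W :=
    Submodule.add_mem _
      (Submodule.sub_mem _ (Submodule.sub_mem _ hXW (hinv _ _ hXW)) (hinv _ _ hXW))
      (hinv _ _ (hinv _ _ hXW))
  rw [loc6 X (V6.symm hX6) i j k l hij hik hil hjk hjl hkl] at hYW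
  have hDW : Dm i j k l ∈ W := by
    have h2 := Submodule.smul_mem W (X i j - X k j - X i l + X k l)⁻¹ hYW
    rwa [smul_smul, inv_mul_cancel₀ hu, one_smul] at h2
  have hDall : ∀ a b c d : Fin n, a ≠ b → a ≠ c → a ≠ d → b ≠ c → b ≠ d → c ≠ d →
      Dm a b c d ∈ W := by
    intro a b c d h1 h2 h3 h4 h5 h6
    obtain ⟨σ, hσ1, hσ2, hσ3, hσ4⟩ :=
      exists_perm_map4 i j k l a b c d hij hik hil hjk hjl hkl h1 h2 h3 h4 h5 h6
    have hmem := hinv σ _ hDW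
    rwa [act_Dm, hσ1, hσ2, hσ3, hσ4] at hmem
  refine le_antisymm hle fun Y hY => ?_
  exact span6 hn i j hij hY hDall

lemma V5_ne_bot (hn : 4 ≤ n) : V5 n ≠ ⊥ := by
  intro h
  have h01 : (⟨0, by omega⟩ : Fin n) ≠ ⟨1, by omega⟩ := by simp [Fin.ext_iff]
  have h02 : (⟨0, by omega⟩ : Fin n) ≠ ⟨2, by omega⟩ := by simp [Fin.ext_iff]
  have h12 : (⟨1, by omega⟩ : Fin n) ≠ ⟨2, by omega⟩ := by simp [Fin.ext_iff]
  have hmem : Tm (⟨0, by omega⟩ : Fin n) ⟨1, by omega⟩ ⟨2, by omega⟩ ∈ V5 n := Tm_mem_V5 _ _ _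
  rw [h, Submodule.mem_bot] at hmem
  have hent : Tm (⟨0, by omega⟩ : Fin n) ⟨1, by omega⟩ ⟨2, by omega⟩
      ⟨0, by omega⟩ ⟨1, by omega⟩ = 1 := by
    simp [Tm, ind, h01, h02, h12, h01.symm, h02.symm, h12.symm]
  rw [hmem] at hent
  simp at hent

lemma V6_ne_bot (hn : 4 ≤ n) : V6 n ≠ ⊥ := by
  intro h
  have h01 : (⟨0, by omega⟩ : Fin n) ≠ ⟨1, by omega⟩ := by simp [Fin.ext_iff]
  have h02 : (⟨0, by omega⟩ : Fin n) ≠ ⟨2, by omega⟩ := by simp [Fin.ext_iff]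
  have h03 : (⟨0, by omega⟩ : Fin n) ≠ ⟨3, by omega⟩ := by simp [Fin.ext_iff]
  have h12 : (⟨1, by omega⟩ : Fin n) ≠ ⟨2, by omega⟩ := by simp [Fin.ext_iff]
  have h13 : (⟨1, by omega⟩ : Fin n) ≠ ⟨3, by omega⟩ := by simp [Fin.ext_iff]
  have h23 : (⟨2, by omega⟩ : Fin n) ≠ ⟨3, by omega⟩ := by simp [Fin.ext_iff]
  have hmem : Dm (⟨0, by omega⟩ : Fin n) ⟨1, by omega⟩ ⟨2, by omega⟩ ⟨3, by omega⟩ ∈ V6 n :=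
    Dm_mem_V6 _ _ _ _ h01 h03 h12 h23
  rw [h, Submodule.mem_bot] at hmem
  have hent : Dm (⟨0, by omega⟩ : Fin n) ⟨1, by omega⟩ ⟨2, by omega⟩ ⟨3, by omega⟩
      ⟨0, by omega⟩ ⟨1, by omega⟩ = 1 := by
    simp [Dm, ind, h01, h02, h03, h12, h13, h23, h01.symm, h02.symm, h03.symm,
      h12.symm, h13.symm, h23.symm]
  rw [hmem] at hent
  simp at hent

variable (n)

/-- For `n ≥ 4`, `V₅` and `V₆` are irreducible
`Sₙ`-subrepresentations of `ℝⁿˣⁿ`: each is nonzero, invariant, and has no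
invariant subspaces other than `⊥` and itself. -/
theorem V5_V6_irreducible (hn : 4 ≤ n) :
    (V5 n ≠ ⊥ ∧ Invariant n (V5 n) ∧
      ∀ W : Submodule ℝ (Matrix (Fin n) (Fin n) ℝ),
        W ≤ V5 n → Invariant n W → W = ⊥ ∨ W = V5 n) ∧
    (V6 n ≠ ⊥ ∧ Invariant n (V6 n) ∧
      ∀ W : Submodule ℝ (Matrix (Fin n) (Fin n) ℝ),
        W ≤ V6 n → Invariant n W → W = ⊥ ∨ W = V6 n) := by
  refine ⟨⟨V5_ne_bot hn, V5_invariant, fun W hle hinv => ?_⟩,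
    ⟨V6_ne_bot hn, V6_invariant, fun W hle hinv => ?_⟩⟩
  · rcases eq_or_ne W ⊥ with h | h
    · exact Or.inl h
    · exact Or.inr (aux5 hn W hle hinv h)
  · rcases eq_or_ne W ⊥ with h | h
    · exact Or.inl h
    · exact Or.inr (aux6 hn W hle hinv h)

end GraphIrred
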